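/- Let F be a field, let n > 3, and let a : Fin n → Fˣ. For c ∈ F define m(c) = #{i : (a i : F) = c} + #{i : ((a i)⁻¹ : F) = c}. Assume the regularity condition: for all i ≠ j one has a i ≠ a j and (a i)·(a j) ≠ 1. Then there is at most one c ∈ F with m(c) ≥ 2 (almost simple spectrum) if and only if it is NOT the case that ((1:F) ≠ −1 and a i = 1 for some i and a j = −1 for some j). -/

import Mathlib

open scoped Classical in
/-- **Lemma 2.11(4), case `G = D_n`.** Let `n > 3` and let `a : Fin n → Fˣ` satisfy the
regularity condition for `D_n`. A regular semisimple element with eigenvalues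
`a 1, …, a n, (a 1)⁻¹, …, (a n)⁻¹` on the natural `2n`-dimensional module of `D_n`
(eigenvalue multiplicities given by `m`) has almost simple spectrum (at most one
eigenvalue of multiplicity at least `2`) if and only if it is not the case that
`char F ≠ 2` and both `1` and `-1` occur among the `a i`. -/
theorem regular_Dn_almost_simple_iff
    {F : Type*} [Field F] {n : ℕ} (hn : 3 < n)
    (a : Fin n → Fˣ)
    (m : F → ℕ)
    (hm : ∀ c : F, m c =
      (Finset.univ.filter (fun i => (a i : F) = c)).card +
      (Finset.univ.filter (fun i => (((a i)⁻¹ : Fˣ) : F) = c)).card)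
    (hreg : ∀ i j, i ≠ j → a i ≠ a j ∧ a i * a j ≠ 1) :
    (∀ c c' : F, 2 ≤ m c → 2 ≤ m c' → c = c') ↔
      ¬ ((1 : F) ≠ -1 ∧ (∃ i, (a i : F) = 1) ∧ (∃ j, (a j : F) = -1)) := by
  classical
  -- If some `a i` equals `c` (as an element of `F`) with `c * c = 1`, then `m c ≥ 2`.
  have lower : ∀ (c : F) (i : Fin n), (a i : F) = c → c * c = 1 → 2 ≤ m c := by
    intro c i hi hcc
    rw [hm]
    have h1 : i ∈ Finset.univ.filter (fun i => (a i : F) = c) := by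
      simp [hi]
    have h2 : i ∈ Finset.univ.filter (fun i => (((a i)⁻¹ : Fˣ) : F) = c) := by
      have : (((a i)⁻¹ : Fˣ) : F) = (a i : F)⁻¹ := by push_cast; ring
      have hc0 : c ≠ 0 := by
        intro h; rw [h] at hcc; simp at hcc
      simp only [Finset.mem_filter, Finset.mem_univ, true_and, this, hi]
      field_simp
      rw [sq]; exact hcc.symm
    have c1 : 1 ≤ (Finset.univ.filter (fun i => (a i : F) = c)).card :=
      Finset.card_pos.mpr ⟨i, h1⟩
    have c2 : 1 ≤ (Finset.univ.filter (fun i => (((a i)⁻¹ : Fˣ) : F) = c)).card :=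
      Finset.card_pos.mpr ⟨i, h2⟩
    omega
  -- Conversely, `m c ≥ 2` forces `c ∈ {1, -1}` and `c` to occur among the `a i`.
  have key : ∀ c : F, 2 ≤ m c → (c = 1 ∨ c = -1) ∧ ∃ i, (a i : F) = c := by
    intro c hc
    rw [hm] at hc
    have h1 : (Finset.univ.filter (fun i => (a i : F) = c)).card ≤ 1 := by
      refine Finset.card_le_one.mpr ?_
      intro i hi j hj
      simp only [Finset.mem_filter] at hi hj
      by_contra hij
      exact (hreg i j hij).1 (Units.ext (hi.2.trans hj.2.symm))
    have h2 : (Finset.univ.filter (fun i => (((a i)⁻¹ : Fˣ) : F) = c)).card ≤ 1 := by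
      refine Finset.card_le_one.mpr ?_
      intro i hi j hj
      simp only [Finset.mem_filter] at hi hj
      by_contra hij
      have hinv : (a i)⁻¹ = (a j)⁻¹ := Units.ext (hi.2.trans hj.2.symm)
      exact (hreg i j hij).1 (inv_injective hinv)
    obtain ⟨i, hi⟩ := Finset.card_pos.mp
      (show 0 < (Finset.univ.filter (fun i => (a i : F) = c)).card by omega)
    obtain ⟨j, hj⟩ := Finset.card_pos.mp
      (show 0 < (Finset.univ.filter (fun i => (((a i)⁻¹ : Fˣ) : F) = c)).card by omega)
    simp only [Finset.mem_filter, Finset.mem_univ, true_and] at hi hj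
    have hij : i = j := by
      by_contra hij
      refine (hreg i j hij).2 (Units.ext ?_)
      push_cast
      have : (a j : F) * (((a j)⁻¹ : Fˣ) : F) = 1 := by
        push_cast; simp
      calc (a i : F) * (a j : F) = c * (a j : F) := by rw [hi]
        _ = (((a j)⁻¹ : Fˣ) : F) * (a j : F) := by rw [hj]
        _ = 1 := by rw [mul_comm]; exact this
    subst hij
    have hcc : c * c = 1 := by
      calc c * c = (a i : F) * (((a i)⁻¹ : Fˣ) : F) := by rw [hi, hj]
        _ = 1 := by push_cast; simp
    exact ⟨mul_self_eq_one_iff.mp hcc, i, hi⟩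
  constructor
  · intro hsimple ⟨hne, ⟨i, hi⟩, ⟨j, hj⟩⟩
    have m1 : 2 ≤ m 1 := lower 1 i hi (by ring)
    have m2 : 2 ≤ m (-1) := lower (-1) j hj (by ring)
    exact hne (hsimple 1 (-1) m1 m2)
  · intro hnot c c' hc hc'
    obtain ⟨hcv, i, hi⟩ := key c hc
    obtain ⟨hcv', j, hj⟩ := key c' hc'
    by_contra hne
    have hone : (1 : F) ≠ -1 := by
      intro h
      apply hne
      rcases hcv with rfl | rfl <;> rcases hcv' with rfl | rfl <;>
        first | exact absurd rfl hne | exact absurd h hne | exact absurd h.symm hne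
    apply hnot
    refine ⟨hone, ?_, ?_⟩
    · rcases hcv with rfl | rfl
      · exact ⟨i, hi⟩
      · rcases hcv' with rfl | rfl
        · exact ⟨j, hj⟩
        · exact absurd rfl hne
    · rcases hcv with rfl | rfl
      · rcases hcv' with rfl | rfl
        · exact absurd rfl hne
        · exact ⟨j, hj⟩
      · exact ⟨i, hi⟩
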